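/- In the heterogeneous setup, the matrix Q − P + D_blk is symmetric, and for every Y = (Y_s)_{s∈S} one has vec(Y)ᵀ (Q − P + D_blk) vec(Y) = Σ_{s∈S} Σ_{s'∈S} Σ_{t∈T_{ss'}} Σ_{(i,j):(A_t)_{ij}=1} ‖(Y_s)_{i,:} H_t − (Y_{s'})_{j,:}‖². In particular, Q − P + D_blk is positive semidefinite. -/

import Mathlib

open Matrix Kronecker BigOperators

/-- **Heterogeneous setup.**  `S` is a finite set of node types; each `s : S` has `n s`
nodes and feature dimension `d s ≥ 1`.  For each ordered pair of node types `(s, s')`,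
`T s s'` is the (finite) set of edge types connecting them; each `t : T s s'` carries a
0/1 adjacency matrix `A t ∈ ℝ^{n s × n s'}` and a compatibility matrix
`H t ∈ ℝ^{d s × d s'}`.  The edge types are closed under inversion: `einv t : T s' s`
satisfies `einv (einv t) = t` and `A (einv t) = (A t)ᵀ`. -/
structure HeteroSetup where
  S : Type
  [fintypeS : Fintype S]
  [decEqS : DecidableEq S]
  n : S → ℕ
  d : S → ℕ
  d_pos : ∀ s, 1 ≤ d s
  T : S → S → Type
  [fintypeT : ∀ s s', Fintype (T s s')]
  A : ∀ {s s' : S}, T s s' → Matrix (Fin (n s)) (Fin (n s')) ℝ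
  H : ∀ {s s' : S}, T s s' → Matrix (Fin (d s)) (Fin (d s')) ℝ
  einv : ∀ {s s' : S}, T s s' → T s' s
  einv_einv : ∀ {s s' : S} (t : T s s'), einv (einv t) = t
  A_einv : ∀ {s s' : S} (t : T s s'), A (einv t) = (A t)ᵀ
  A_zero_one : ∀ {s s' : S} (t : T s s') (i : Fin (n s)) (j : Fin (n s')),
    A t i j = 0 ∨ A t i j = 1

attribute [instance] HeteroSetup.fintypeS HeteroSetup.decEqS HeteroSetup.fintypeT

namespace HeteroSetup

variable (hg : HeteroSetup)

/-- The space of node embeddings `Y = (Y_s)_{s ∈ S}`, `Y_s ∈ ℝ^{n_s × d_s}`. -/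
abbrev Emb := ∀ s : hg.S, Matrix (Fin (hg.n s)) (Fin (hg.d s)) ℝ

/-- The type-`t` degree matrix `D_{st}` of type-`s` nodes: the diagonal matrix of the
row sums of `A t` for `t ∈ T_{ss'}`. -/
noncomputable def Dst {s s' : hg.S} (t : hg.T s s') : Matrix (Fin (hg.n s)) (Fin (hg.n s)) ℝ :=
  Matrix.diagonal fun i => ∑ j, hg.A t i j

/-- `D_s = Σ_{s'∈S} Σ_{t∈T_{ss'}} D_{st}`. -/
noncomputable def Dtot (s : hg.S) : Matrix (Fin (hg.n s)) (Fin (hg.n s)) ℝ :=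
  ∑ s' : hg.S, ∑ t : hg.T s s', hg.Dst t

/-- The heterogeneous energy
`ℓ(Y) = Σ_s [ (1/2)‖Y_s − B_s‖_F² + (λ/2) Σ_{s'} Σ_{t ∈ T_{ss'}} Σ_{(i,j) : (A_t)_{ij} = 1}
‖(Y_s)_{i,:} H_t − (Y_{s'})_{j,:}‖² ]`.  Since the entries of `A t` are 0 or 1, the sum
over the edges `(i,j)` with `(A_t)_{ij} = 1` is written with the weight `A t i j`. -/
noncomputable def energy (lam : ℝ) (B : hg.Emb) (Y : hg.Emb) : ℝ :=
  ∑ s : hg.S,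
    ((1 / 2 : ℝ) * ∑ i, ∑ k, (Y s i k - B s i k) ^ 2 +
      lam / 2 * ∑ s' : hg.S, ∑ t : hg.T s s', ∑ i, ∑ j,
        hg.A t i j * ∑ k', ((Y s i ᵥ* hg.H t) k' - Y s' j k') ^ 2)

/-- The global index set for the stacked column-vectorization `vec(Y)`: node type `s`,
column (feature) index `k : Fin (d s)`, row (node) index `i : Fin (n s)`. -/
abbrev Idx := Σ s : hg.S, Fin (hg.d s) × Fin (hg.n s)

/-- The stacked column-vectorization `vec(Y)`, concatenating `vec(Y_s)` over `s ∈ S`: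
`vec(Y)⟨s, (k, i)⟩ = (Y_s)_{ik}`. -/
noncomputable def vecOf (Y : hg.Emb) : hg.Idx → ℝ := fun x => Y x.1 x.2.2 x.2.1

/-- The block matrix `P` with blocks `P_{ss'} = Σ_{t∈T_{ss'}} (H_t + H_{t_inv}ᵀ) ⊗ A_t`
(entrywise: the `((k,i),(k',j))` entry of the `(s,s')` block is
`(H_t + H_{t_inv}ᵀ)_{k k'} (A_t)_{i j}`). -/
noncomputable def Pmat : Matrix hg.Idx hg.Idx ℝ := fun x y =>
  ∑ t : hg.T x.1 y.1, (hg.H t + (hg.H (hg.einv t))ᵀ) x.2.1 y.2.1 * hg.A t x.2.2 y.2.2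

/-- The block-diagonal matrix `Q` with diagonal blocks
`Q_s = Σ_{s'∈S} Σ_{t∈T_{ss'}} (H_t H_tᵀ ⊗ D_{st})`. -/
noncomputable def Qmat : Matrix hg.Idx hg.Idx ℝ :=
  Matrix.blockDiagonal' fun s => ∑ s' : hg.S, ∑ t : hg.T s s',
    (hg.H t * (hg.H t)ᵀ) ⊗ₖ hg.Dst t

/-- The block-diagonal matrix `D_blk` with diagonal blocks `I_{d_s} ⊗ D_s`. -/
noncomputable def Dblk : Matrix hg.Idx hg.Idx ℝ :=
  Matrix.blockDiagonal' fun s => (1 : Matrix (Fin (hg.d s)) (Fin (hg.d s)) ℝ) ⊗ₖ hg.Dtot s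

end HeteroSetup

open Matrix HeteroSetup


section Helpers

lemma quad {I : Type} [Fintype I] (M : Matrix I I ℝ) (v : I → ℝ) :
    v ⬝ᵥ (M *ᵥ v) = ∑ x, ∑ y, v x * M x y * v y := by
  simp [dotProduct, mulVec, Finset.mul_sum, mul_assoc]

lemma sum_idx (hg : HeteroSetup) (f : hg.Idx → ℝ) :
    ∑ x : hg.Idx, f x = ∑ s, ∑ k, ∑ i, f ⟨s, (k, i)⟩ := by
  rw [← Finset.univ_sigma_univ, Finset.sum_sigma]
  simp [Fintype.sum_prod_type]

lemma quad_bd (hg : HeteroSetup)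
    (M : ∀ s : hg.S, Matrix (Fin (hg.d s) × Fin (hg.n s)) (Fin (hg.d s) × Fin (hg.n s)) ℝ)
    (v : hg.Idx → ℝ) :
    v ⬝ᵥ (Matrix.blockDiagonal' M *ᵥ v) =
      ∑ s, ∑ k, ∑ i, ∑ k', ∑ j, v ⟨s, (k, i)⟩ * M s (k, i) (k', j) * v ⟨s, (k', j)⟩ := by
  rw [quad, sum_idx]
  refine Finset.sum_congr rfl fun s _ => Finset.sum_congr rfl fun k _ =>
    Finset.sum_congr rfl fun i _ => ?_
  rw [sum_idx]
  rw [Finset.sum_eq_single s]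
  · refine Finset.sum_congr rfl fun k' _ => Finset.sum_congr rfl fun j _ => ?_
    rw [Matrix.blockDiagonal'_apply_eq]
  · intro s' _ hs'
    simp [Matrix.blockDiagonal'_apply_ne _ _ _ (Ne.symm hs')]
  · simp

lemma inner_sq {a c : ℕ} (u : Fin a → ℝ) (Hm : Matrix (Fin a) (Fin c) ℝ) :
    ∑ k, ∑ k', u k * (∑ m, Hm k m * Hm k' m) * u k' = ∑ m, (∑ k, u k * Hm k m) ^ 2 := by
  have rhs : ∀ m : Fin c, (∑ k, u k * Hm k m) ^ 2 = ∑ k, ∑ k', (u k * Hm k m) * (u k' * Hm k' m) := by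
    intro m; rw [sq, Finset.sum_mul_sum]
  have lhs' : ∀ k k', u k * (∑ m, Hm k m * Hm k' m) * u k' = ∑ m, u k * Hm k m * (u k' * Hm k' m) := by
    intro k k'; rw [Finset.mul_sum, Finset.sum_mul]
    exact Finset.sum_congr rfl fun m _ => by ring
  simp only [rhs, lhs']
  conv_lhs => enter [2, k]; rw [Finset.sum_comm]
  rw [Finset.sum_comm]

lemma quadQ (hg : HeteroSetup) (Y : hg.Emb) :
    hg.vecOf Y ⬝ᵥ (hg.Qmat *ᵥ hg.vecOf Y) =
      ∑ s, ∑ s', ∑ t : hg.T s s', ∑ i, (∑ j, hg.A t i j) * ∑ m, ((Y s i ᵥ* hg.H t) m) ^ 2 := by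
  rw [HeteroSetup.Qmat, quad_bd]
  simp only [Matrix.sum_apply, Matrix.kroneckerMap_apply, HeteroSetup.Dst,
    Matrix.diagonal_apply, mul_ite, mul_zero, Finset.sum_ite_irrel, Finset.sum_ite_eq,
    ite_mul, zero_mul, Finset.mem_univ, if_true, Finset.sum_const_zero,
    HeteroSetup.vecOf]
  have dist : ∀ (s : hg.S) (k : Fin (hg.d s)) (i : Fin (hg.n s)) (k' : Fin (hg.d s)),
      (Y s i k * ∑ s', ∑ t : hg.T s s', (hg.H t * (hg.H t)ᵀ) k k' * ∑ j, hg.A t i j) * Y s i k'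
        = ∑ s', ∑ t : hg.T s s',
            Y s i k * ((hg.H t * (hg.H t)ᵀ) k k' * ∑ j, hg.A t i j) * Y s i k' := by
    intro s k i k'
    rw [Finset.mul_sum, Finset.sum_mul]
    refine Finset.sum_congr rfl fun s' _ => ?_
    rw [Finset.mul_sum, Finset.sum_mul]
  simp only [dist]
  conv_lhs => enter [2, s, 2, k, 2, i]; rw [Finset.sum_comm]
  conv_lhs => enter [2, s, 2, k, 2, i, 2, s']; rw [Finset.sum_comm]
  conv_lhs => enter [2, s, 2, k]; rw [Finset.sum_comm]
  conv_lhs => enter [2, s, 2, k, 2, s']; rw [Finset.sum_comm]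
  conv_lhs => enter [2, s]; rw [Finset.sum_comm]
  conv_lhs => enter [2, s, 2, s']; rw [Finset.sum_comm]
  conv_lhs => enter [2, s, 2, s', 2, t]; rw [Finset.sum_comm]
  refine Finset.sum_congr rfl fun s _ => Finset.sum_congr rfl fun s' _ =>
    Finset.sum_congr rfl fun t _ => Finset.sum_congr rfl fun i _ => ?_
  have h1 : (∑ k, ∑ k', Y s i k * ((hg.H t * (hg.H t)ᵀ) k k' * ∑ j, hg.A t i j) * Y s i k')
      = (∑ j, hg.A t i j) * ∑ k, ∑ k', Y s i k * (∑ m, hg.H t k m * hg.H t k' m) * Y s i k' := by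
    rw [Finset.mul_sum]
    refine Finset.sum_congr rfl fun k _ => ?_
    rw [Finset.mul_sum]
    refine Finset.sum_congr rfl fun k' _ => ?_
    simp only [Matrix.mul_apply, Matrix.transpose_apply]
    ring
  rw [h1, inner_sq (fun k => Y s i k) (hg.H t)]
  simp [Matrix.vecMul, dotProduct]

lemma quadD (hg : HeteroSetup) (Y : hg.Emb) :
    hg.vecOf Y ⬝ᵥ (hg.Dblk *ᵥ hg.vecOf Y) =
      ∑ s, ∑ s', ∑ t : hg.T s s', ∑ i, (∑ j, hg.A t i j) * ∑ m, (Y s i m) ^ 2 := by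
  rw [HeteroSetup.Dblk, quad_bd]
  simp only [Matrix.kroneckerMap_apply, Matrix.one_apply, HeteroSetup.Dtot,
    Matrix.sum_apply, HeteroSetup.Dst, Matrix.diagonal_apply, mul_ite, mul_zero, mul_one,
    ite_mul, zero_mul, one_mul, Finset.sum_ite_irrel, Finset.sum_ite_eq, Finset.sum_ite_eq',
    Finset.mem_univ, if_true, Finset.sum_const_zero, HeteroSetup.vecOf]
  have dist : ∀ (s : hg.S) (k : Fin (hg.d s)) (i : Fin (hg.n s)),
      (Y s i k * ∑ s', ∑ t : hg.T s s', ∑ j, hg.A t i j) * Y s i k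
        = ∑ s', ∑ t : hg.T s s', (∑ j, hg.A t i j) * (Y s i k * Y s i k) := by
    intro s k i
    rw [Finset.mul_sum, Finset.sum_mul]
    refine Finset.sum_congr rfl fun s' _ => ?_
    rw [Finset.mul_sum, Finset.sum_mul]
    exact Finset.sum_congr rfl fun t _ => by ring
  simp only [dist]
  conv_lhs => enter [2, s, 2, k]; rw [Finset.sum_comm]
  conv_lhs => enter [2, s, 2, k, 2, s']; rw [Finset.sum_comm]
  conv_lhs => enter [2, s]; rw [Finset.sum_comm]
  conv_lhs => enter [2, s, 2, s']; rw [Finset.sum_comm]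
  conv_lhs => enter [2, s, 2, s', 2, t]; rw [Finset.sum_comm]
  refine Finset.sum_congr rfl fun s _ => Finset.sum_congr rfl fun s' _ =>
    Finset.sum_congr rfl fun t _ => Finset.sum_congr rfl fun i _ => ?_
  rw [Finset.mul_sum]
  exact Finset.sum_congr rfl fun k _ => by ring

lemma sum_einv (hg : HeteroSetup) (F : ∀ s s' : hg.S, hg.T s s' → ℝ) :
    ∑ s, ∑ s', ∑ t : hg.T s s', F s s' t = ∑ s, ∑ s', ∑ t : hg.T s s', F s' s (hg.einv t) := by
  rw [Finset.sum_comm]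
  refine Finset.sum_congr rfl fun s _ => Finset.sum_congr rfl fun s' _ => ?_
  exact (Fintype.sum_equiv ⟨hg.einv, hg.einv, hg.einv_einv, hg.einv_einv⟩
    (fun t : hg.T s s' => F s' s (hg.einv t)) (fun u => F s' s u) (fun t => rfl)).symm

lemma quadP (hg : HeteroSetup) (Y : hg.Emb) :
    hg.vecOf Y ⬝ᵥ (hg.Pmat *ᵥ hg.vecOf Y) =
      ∑ s, ∑ s', ∑ t : hg.T s s', ∑ i, ∑ j,
        hg.A t i j * (2 * ∑ m, (Y s i ᵥ* hg.H t) m * Y s' j m) := by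
  rw [quad, sum_idx]
  conv_lhs => enter [2, s, 2, k, 2, i]; rw [sum_idx]
  simp only [HeteroSetup.Pmat, HeteroSetup.vecOf, Matrix.add_apply, Matrix.transpose_apply]
  have dist : ∀ (s : hg.S) (k : Fin (hg.d s)) (i : Fin (hg.n s)) (s' : hg.S)
      (k' : Fin (hg.d s')) (j : Fin (hg.n s')),
      (Y s i k * ∑ t : hg.T s s', (hg.H t k k' + hg.H (hg.einv t) k' k) * hg.A t i j) * Y s' j k'
        = ∑ t : hg.T s s',
            (hg.A t i j * (Y s i k * hg.H t k k' * Y s' j k') +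
             hg.A t i j * (Y s i k * hg.H (hg.einv t) k' k * Y s' j k')) := by
    intro s k i s' k' j
    rw [Finset.mul_sum, Finset.sum_mul]
    exact Finset.sum_congr rfl fun t _ => by ring
  simp only [dist]
  -- order now: s, k, i, s', k', j, t ; reorder to s, s', t, i, j, k, k'
  conv_lhs => enter [2, s, 2, k, 2, i, 2, s', 2, k']; rw [Finset.sum_comm]
  conv_lhs => enter [2, s, 2, k, 2, i, 2, s']; rw [Finset.sum_comm]
  conv_lhs => enter [2, s, 2, k]; rw [Finset.sum_comm]
  conv_lhs => enter [2, s, 2, k, 2, s']; rw [Finset.sum_comm]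
  conv_lhs => enter [2, s]; rw [Finset.sum_comm]
  conv_lhs => enter [2, s, 2, s']; rw [Finset.sum_comm]
  conv_lhs => enter [2, s, 2, s', 2, t]; rw [Finset.sum_comm]
  conv_lhs => enter [2, s, 2, s', 2, t, 2, i, 2, k]; rw [Finset.sum_comm]
  conv_lhs => enter [2, s, 2, s', 2, t, 2, i]; rw [Finset.sum_comm]
  have hsplit : ∀ (s s' : hg.S) (t : hg.T s s') (i : Fin (hg.n s)) (j : Fin (hg.n s')),
      (∑ k, ∑ k', (hg.A t i j * (Y s i k * hg.H t k k' * Y s' j k') +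
          hg.A t i j * (Y s i k * hg.H (hg.einv t) k' k * Y s' j k')))
        = hg.A t i j * ∑ m, (Y s i ᵥ* hg.H t) m * Y s' j m +
          hg.A t i j * ∑ m, (Y s' j ᵥ* hg.H (hg.einv t)) m * Y s i m := by
    intro s s' t i j
    have h1 : ∑ k, ∑ k', hg.A t i j * (Y s i k * hg.H t k k' * Y s' j k')
        = hg.A t i j * ∑ m, (Y s i ᵥ* hg.H t) m * Y s' j m := by
      rw [Finset.sum_comm, Finset.mul_sum]
      refine Finset.sum_congr rfl fun m _ => ?_
      simp only [Matrix.vecMul, dotProduct, Finset.sum_mul, Finset.mul_sum]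
      try exact Finset.sum_congr rfl fun k _ => by ring
    have h2 : ∑ k, ∑ k', hg.A t i j * (Y s i k * hg.H (hg.einv t) k' k * Y s' j k')
        = hg.A t i j * ∑ m, (Y s' j ᵥ* hg.H (hg.einv t)) m * Y s i m := by
      rw [Finset.mul_sum]
      refine Finset.sum_congr rfl fun m _ => ?_
      simp only [Matrix.vecMul, dotProduct, Finset.sum_mul, Finset.mul_sum]
      try exact Finset.sum_congr rfl fun k _ => by ring
    simp only [Finset.sum_add_distrib]
    rw [h1, h2]
  simp only [hsplit]
  simp only [Finset.sum_add_distrib]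
  rw [sum_einv hg (fun s s' t => ∑ i, ∑ j,
    hg.A t i j * ∑ m, (Y s' j ᵥ* hg.H (hg.einv t)) m * Y s i m)]
  simp only [hg.einv_einv, hg.A_einv, Matrix.transpose_apply]
  conv_lhs => enter [2, 2, s, 2, s', 2, t]; rw [Finset.sum_comm]
  rw [← two_mul]
  simp only [Finset.mul_sum]
  refine Finset.sum_congr rfl fun s _ => Finset.sum_congr rfl fun s' _ =>
    Finset.sum_congr rfl fun t _ => Finset.sum_congr rfl fun i _ =>
      Finset.sum_congr rfl fun j _ => Finset.sum_congr rfl fun m _ => by ring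

lemma Qsymm (hg : HeteroSetup) : hg.Qmatᵀ = hg.Qmat := by
  rw [HeteroSetup.Qmat, Matrix.blockDiagonal'_transpose]
  refine congrArg Matrix.blockDiagonal' ?_
  funext s
  rw [Matrix.transpose_sum]
  refine Finset.sum_congr rfl fun s' _ => ?_
  rw [Matrix.transpose_sum]
  refine Finset.sum_congr rfl fun t _ => ?_
  show (hg.H t * (hg.H t)ᵀ)ᵀ ⊗ₖ (hg.Dst t)ᵀ = _
  rw [Matrix.transpose_mul, Matrix.transpose_transpose, HeteroSetup.Dst,
    Matrix.diagonal_transpose]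

lemma Dsymm (hg : HeteroSetup) : hg.Dblkᵀ = hg.Dblk := by
  rw [HeteroSetup.Dblk, Matrix.blockDiagonal'_transpose]
  refine congrArg Matrix.blockDiagonal' ?_
  funext s
  show (1 : Matrix (Fin (hg.d s)) (Fin (hg.d s)) ℝ)ᵀ ⊗ₖ (hg.Dtot s)ᵀ = _
  have hD : (hg.Dtot s)ᵀ = hg.Dtot s := by
    rw [HeteroSetup.Dtot, Matrix.transpose_sum]
    refine Finset.sum_congr rfl fun s' _ => ?_
    rw [Matrix.transpose_sum]
    exact Finset.sum_congr rfl fun t _ => by rw [HeteroSetup.Dst, Matrix.diagonal_transpose]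
  rw [Matrix.transpose_one, hD]

lemma Psymm (hg : HeteroSetup) : hg.Pmatᵀ = hg.Pmat := by
  ext x y
  rw [Matrix.transpose_apply]
  simp only [HeteroSetup.Pmat]
  refine Fintype.sum_equiv ⟨hg.einv, hg.einv, hg.einv_einv, hg.einv_einv⟩ _ _ fun t => ?_
  simp only [Equiv.coe_fn_mk, hg.einv_einv, hg.A_einv, Matrix.transpose_apply,
    Matrix.add_apply]
  ring

end Helpers

/-- In the heterogeneous setup, `Q − P + D_blk` is symmetric, its
quadratic form satisfies, for every `Y = (Y_s)`,
`vec(Y)ᵀ (Q − P + D_blk) vec(Y)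
  = Σ_{s} Σ_{s'} Σ_{t∈T_{ss'}} Σ_{(i,j):(A_t)_{ij}=1} ‖(Y_s)_{i,:} H_t − (Y_{s'})_{j,:}‖²`
(the sum over edges is written with the 0/1 weights `A t i j`), and in particular
`Q − P + D_blk` is positive semidefinite. -/
theorem stmt3 (hg : HeteroSetup) :
    (hg.Qmat - hg.Pmat + hg.Dblk)ᵀ = hg.Qmat - hg.Pmat + hg.Dblk ∧
    (∀ Y : hg.Emb,
      hg.vecOf Y ⬝ᵥ ((hg.Qmat - hg.Pmat + hg.Dblk) *ᵥ hg.vecOf Y) =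
        ∑ s : hg.S, ∑ s' : hg.S, ∑ t : hg.T s s', ∑ i, ∑ j,
          hg.A t i j * ∑ k', ((Y s i ᵥ* hg.H t) k' - Y s' j k') ^ 2) ∧
    (hg.Qmat - hg.Pmat + hg.Dblk).PosSemidef := by
  have hsym : (hg.Qmat - hg.Pmat + hg.Dblk)ᵀ = hg.Qmat - hg.Pmat + hg.Dblk := by
    rw [Matrix.transpose_add, Matrix.transpose_sub, Qsymm, Psymm, Dsymm]
  have hquad : ∀ Y : hg.Emb,
      hg.vecOf Y ⬝ᵥ ((hg.Qmat - hg.Pmat + hg.Dblk) *ᵥ hg.vecOf Y) =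
        ∑ s : hg.S, ∑ s' : hg.S, ∑ t : hg.T s s', ∑ i, ∑ j,
          hg.A t i j * ∑ k', ((Y s i ᵥ* hg.H t) k' - Y s' j k') ^ 2 := by
    intro Y
    have hD2 : hg.vecOf Y ⬝ᵥ (hg.Dblk *ᵥ hg.vecOf Y) =
        ∑ s, ∑ s', ∑ t : hg.T s s', ∑ i, ∑ j, hg.A t i j * ∑ m, (Y s' j m) ^ 2 := by
      rw [quadD, sum_einv hg (fun s s' t => ∑ i, (∑ j, hg.A t i j) * ∑ m, (Y s i m) ^ 2)]
      refine Finset.sum_congr rfl fun s _ => Finset.sum_congr rfl fun s' _ =>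
        Finset.sum_congr rfl fun t _ => ?_
      simp only [hg.A_einv, Matrix.transpose_apply]
      conv_rhs => rw [Finset.sum_comm]
      refine Finset.sum_congr rfl fun j _ => ?_
      rw [Finset.sum_mul]
    rw [Matrix.add_mulVec, Matrix.sub_mulVec, dotProduct_add, dotProduct_sub,
      quadQ, quadP, hD2]
    simp only [← Finset.sum_sub_distrib, ← Finset.sum_add_distrib]
    refine Finset.sum_congr rfl fun s _ => Finset.sum_congr rfl fun s' _ =>
      Finset.sum_congr rfl fun t _ => Finset.sum_congr rfl fun i _ => ?_
    rw [Finset.sum_mul, ← Finset.sum_sub_distrib, ← Finset.sum_add_distrib]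
    refine Finset.sum_congr rfl fun j _ => ?_
    have expand : ∑ k', ((Y s i ᵥ* hg.H t) k' - Y s' j k') ^ 2 =
        ∑ k', ((Y s i ᵥ* hg.H t) k') ^ 2 -
          2 * ∑ k', (Y s i ᵥ* hg.H t) k' * Y s' j k' +
          ∑ k', (Y s' j k') ^ 2 := by
      rw [Finset.mul_sum, ← Finset.sum_sub_distrib, ← Finset.sum_add_distrib]
      exact Finset.sum_congr rfl fun m _ => by ring
    rw [expand]
    ring
  refine ⟨hsym, hquad, Matrix.PosSemidef.of_dotProduct_mulVec_nonneg ?_ ?_⟩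
  · show (hg.Qmat - hg.Pmat + hg.Dblk)ᴴ = _
    have : (hg.Qmat - hg.Pmat + hg.Dblk)ᴴ = (hg.Qmat - hg.Pmat + hg.Dblk)ᵀ := by
      ext x y
      simp [Matrix.conjTranspose_apply]
    rw [this, hsym]
  · intro x
    have hx : x = hg.vecOf (fun s => Matrix.of fun i k => x ⟨s, (k, i)⟩) := by
      funext z
      rfl
    have hsx : star x = x := by
      funext z; simp
    rw [hsx]
    rw [hx] at *
    rw [hquad]
    refine Finset.sum_nonneg fun s _ => Finset.sum_nonneg fun s' _ =>
      Finset.sum_nonneg fun t _ => Finset.sum_nonneg fun i _ =>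
        Finset.sum_nonneg fun j _ => ?_
    refine mul_nonneg ?_ (Finset.sum_nonneg fun k _ => sq_nonneg _)
    rcases hg.A_zero_one t i j with h | h <;> rw [h] <;> norm_num
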